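/- arXiv:1111.3885 — 3 statements merged into one kernel-verified Lean document; each statement's English description precedes it below -/
import Mathlib

section
/- For each n ∈ ℕ, let X_n be a metrizable topological vector space over ℝ and let C_n ⊆ X_n be a convexly compact subset. Then the product ∏_{n ∈ ℕ} C_n is convexly compact in ∏_{n ∈ ℕ} X_n equipped with the product topology. -/
open Set Filter Topology

/-- A closed convex subset `C` of a topological vector space is convexly compact if every
family of closed convex subsets of `C` with empty intersection admits a finite subfamily
with empty intersection. -/
def ConvexlyCompact {X : Type*} [AddCommGroup X] [Module ℝ X] [TopologicalSpace X]
    (C : Set X) : Prop :=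
  IsClosed C ∧ Convex ℝ C ∧
    ∀ 𝒜 : Set (Set X), (∀ F ∈ 𝒜, IsClosed F ∧ Convex ℝ F ∧ F ⊆ C) →
      ⋂₀ 𝒜 = ∅ → ∃ s : Finset (Set X), ↑s ⊆ 𝒜 ∧ ⋂₀ (↑s : Set (Set X)) = ∅

/-- In a downward-directed nonempty family, every finite subfamily has a member below it. -/
private lemma exists_subset_of_finset {X : Type*} (𝒜 : Set (Set X))
    (hdir : ∀ A ∈ 𝒜, ∀ B ∈ 𝒜, ∃ D ∈ 𝒜, D ⊆ A ∧ D ⊆ B) (hne : 𝒜.Nonempty)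
    (s : Finset (Set X)) (hs : ↑s ⊆ 𝒜) : ∃ D ∈ 𝒜, ∀ A ∈ s, D ⊆ A := by
  classical
  induction s using Finset.induction_on with
  | empty =>
    obtain ⟨A, hA⟩ := hne
    exact ⟨A, hA, by simp⟩
  | @insert B s hB ih =>
    have hs' : ↑s ⊆ 𝒜 := by
      intro x hx
      exact hs (by simpa using Or.inr hx)
    obtain ⟨D, hD, hDs⟩ := ih hs'
    have hB𝒜 : B ∈ 𝒜 := hs (by simp)
    obtain ⟨D', hD', h1, h2⟩ := hdir D hD B hB𝒜
    refine ⟨D', hD', ?_⟩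
    intro A hA
    rcases Finset.mem_insert.1 hA with rfl | h
    · exact h2
    · exact h1.trans (hDs A h)

/-- A convexly compact set has the finite intersection property for downward-directed
families of closed convex subsets. -/
private lemma ConvexlyCompact.inter_nonempty {X : Type*} [AddCommGroup X] [Module ℝ X]
    [TopologicalSpace X] {C : Set X} (hC : ConvexlyCompact C) (𝒮 : Set (Set X))
    (hprops : ∀ S ∈ 𝒮, IsClosed S ∧ Convex ℝ S ∧ S ⊆ C)
    (hne : ∀ S ∈ 𝒮, S.Nonempty)
    (hdir : ∀ A ∈ 𝒮, ∀ B ∈ 𝒮, ∃ D ∈ 𝒮, D ⊆ A ∧ D ⊆ B)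
    (h𝒮 : 𝒮.Nonempty) : (⋂₀ 𝒮).Nonempty := by
  rw [Set.nonempty_iff_ne_empty]
  intro hcon
  obtain ⟨s, hs𝒮, hs⟩ := hC.2.2 𝒮 hprops hcon
  obtain ⟨D, hD, hDs⟩ := exists_subset_of_finset 𝒮 hdir h𝒮 s hs𝒮
  obtain ⟨x, hx⟩ := hne D hD
  have hmem : x ∈ ⋂₀ (↑s : Set (Set X)) := by
    rw [Set.mem_sInter]
    intro A hA
    exact hDs A (by exact_mod_cast hA) hx
  rw [hs] at hmem
  exact hmem

/-- A chain of balanced neighborhoods of `0` with `B (k+1) + B (k+1) ⊆ B k`,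
forming a neighborhood basis at `0`. -/
private lemma exists_balanced_chain (E : Type*) [AddCommGroup E] [Module ℝ E]
    [TopologicalSpace E] [IsTopologicalAddGroup E] [ContinuousSMul ℝ E]
    [FirstCountableTopology E] :
    ∃ B : ℕ → Set E, (∀ k, B k ∈ 𝓝 (0 : E)) ∧ (∀ k, Balanced ℝ (B k)) ∧
      (∀ k, ∀ x ∈ B (k + 1), ∀ y ∈ B (k + 1), x + y ∈ B k) ∧
      (∀ V ∈ 𝓝 (0 : E), ∃ m, ∀ k, m ≤ k → B k ⊆ V) := by
  obtain ⟨W, hW⟩ := (𝓝 (0 : E)).exists_antitone_basis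
  have hhalf : ∀ U : Set E, ∃ V : Set E, U ∈ 𝓝 (0 : E) →
      V ∈ 𝓝 (0 : E) ∧ ∀ x ∈ V, ∀ y ∈ V, x + y ∈ U := by
    intro U
    by_cases h : U ∈ 𝓝 (0 : E)
    · obtain ⟨V, hV, hV2⟩ := exists_nhds_zero_half h
      exact ⟨V, fun _ => ⟨hV, hV2⟩⟩
    · exact ⟨∅, fun h' => absurd h' h⟩
  choose half hhalf using hhalf
  set B : ℕ → Set E := fun k =>
    Nat.rec (balancedCore ℝ (W 0)) (fun k Bk => balancedCore ℝ (half Bk ∩ W (k + 1))) k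
    with hB
  have hWmem : ∀ k, W k ∈ 𝓝 (0 : E) := fun k => hW.toHasBasis.mem_of_mem trivial
  have hmem : ∀ k, B k ∈ 𝓝 (0 : E) := by
    intro k
    induction k with
    | zero => exact balancedCore_mem_nhds_zero (hWmem 0)
    | succ k ih =>
      exact balancedCore_mem_nhds_zero (Filter.inter_mem ((hhalf _ ih).1) (hWmem (k + 1)))
  refine ⟨B, hmem, fun k => by cases k <;> exact balancedCore_balanced _, ?_, ?_⟩
  · intro k x hx y hy
    have hsub : B (k + 1) ⊆ half (B k) :=
      (balancedCore_subset _).trans Set.inter_subset_left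
    exact (hhalf _ (hmem k)).2 x (hsub hx) y (hsub hy)
  · intro V hV
    obtain ⟨m, -, hm⟩ := hW.toHasBasis.mem_iff.1 hV
    refine ⟨m, fun k hk => ?_⟩
    have hBW : B k ⊆ W k := by
      cases k with
      | zero => exact balancedCore_subset _
      | succ k => exact (balancedCore_subset _).trans Set.inter_subset_right
    exact hBW.trans ((hW.antitone hk).trans hm)

/-- Convex (in fact subconvex) combinations of points `b (k i)` with `b k ∈ B k` and all
indices `k i > j` stay in `B j`, for a balanced additive chain `B`. -/
private lemma sum_mem_chain {E : Type*} [AddCommGroup E] [Module ℝ E]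
    (B : ℕ → Set E) (h0 : ∀ k, (0 : E) ∈ B k)
    (hbal : ∀ k, ∀ t : ℝ, 0 ≤ t → t ≤ 1 → ∀ x ∈ B k, t • x ∈ B k)
    (hadd : ∀ k, ∀ x ∈ B (k + 1), ∀ y ∈ B (k + 1), x + y ∈ B k)
    (b : ℕ → E) (hb : ∀ k, b k ∈ B k) :
    ∀ (d : ℕ) {ι : Type*} (t : Finset ι) (w : ι → ℝ) (k : ι → ℕ) (j : ℕ),
      (∀ i ∈ t, 0 ≤ w i) → (∑ i ∈ t, w i) ≤ 1 →
      (∀ i ∈ t, j < k i ∧ k i ≤ j + d) → (∑ i ∈ t, w i • b (k i)) ∈ B j := by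
  intro d
  induction d with
  | zero =>
    intro ι t w k j hw hw1 hk
    have hz : ∀ i ∈ t, w i • b (k i) = 0 := fun i hi => absurd (hk i hi) (by omega)
    rw [Finset.sum_congr rfl hz, Finset.sum_const_zero]
    exact h0 j
  | succ d ih =>
    intro ι t w k j hw hw1 hk
    classical
    rw [← Finset.sum_filter_add_sum_filter_not t (fun i => k i = j + 1)]
    apply hadd j
    · have h1 : ∑ i ∈ t.filter (fun i => k i = j + 1), w i • b (k i)
          = (∑ i ∈ t.filter (fun i => k i = j + 1), w i) • b (j + 1) := by
        rw [Finset.sum_smul]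
        exact Finset.sum_congr rfl (fun i hi => by rw [(Finset.mem_filter.1 hi).2])
      rw [h1]
      refine hbal (j + 1) _ ?_ ?_ _ (hb (j + 1))
      · exact Finset.sum_nonneg fun i hi => hw i (Finset.filter_subset _ _ hi)
      · exact le_trans (Finset.sum_le_sum_of_subset_of_nonneg (Finset.filter_subset _ _)
          (fun i hi _ => hw i hi)) hw1
    · refine ih _ w k (j + 1) (fun i hi => hw i (Finset.filter_subset _ _ hi))
        (le_trans (Finset.sum_le_sum_of_subset_of_nonneg (Finset.filter_subset _ _)
          (fun i hi _ => hw i hi)) hw1) ?_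
      intro i hi
      obtain ⟨hit, hne⟩ := Finset.mem_filter.1 hi
      obtain ⟨h1, h2⟩ := hk i hit
      exact ⟨by omega, by omega⟩

/-- (Tychonoff theorem for convex compactness.) A countable product of
convexly compact subsets of metrizable topological vector spaces is convexly compact in the
product topology. -/
theorem statement14 {X : ℕ → Type*} [∀ n, AddCommGroup (X n)] [∀ n, Module ℝ (X n)]
    [∀ n, TopologicalSpace (X n)] [∀ n, TopologicalSpace.MetrizableSpace (X n)]
    [∀ n, IsTopologicalAddGroup (X n)] [∀ n, ContinuousSMul ℝ (X n)]
    (C : ∀ n, Set (X n)) (hC : ∀ n, ConvexlyCompact (C n)) :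
    ConvexlyCompact (Set.univ.pi C) := by
  classical
  refine ⟨isClosed_set_pi (fun n _ => (hC n).1), convex_pi (fun n _ => (hC n).2.1), ?_⟩
  intro 𝒜 h𝒜 hempty
  by_contra hcon
  push_neg at hcon
  have hfin : ∀ s : Finset (Set (∀ n, X n)), ↑s ⊆ 𝒜 →
      (⋂₀ (↑s : Set (Set (∀ n, X n)))).Nonempty := by
    intro s hs
    exact hcon s hs
  rcases Set.eq_empty_or_nonempty 𝒜 with h𝒜e | ⟨F₀, hF₀⟩
  · rw [h𝒜e, Set.sInter_empty] at hempty
    exact (Set.univ_eq_empty_iff.1 hempty).elim (fun n => (0 : X n))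
  set Pbar : Set (∀ n, X n) := Set.univ.pi C with hPbar
  set ℬ : Set (Set (∀ n, X n)) :=
    {T | ∃ s : Finset (Set (∀ n, X n)), ↑s ⊆ 𝒜 ∧ T = Pbar ∩ ⋂₀ ↑s} with hℬ
  have hPbarB : Pbar ∈ ℬ := ⟨∅, by simp, by simp⟩
  have hBprops : ∀ T ∈ ℬ, IsClosed T ∧ Convex ℝ T ∧ T ⊆ Pbar ∧ T.Nonempty := by
    rintro T ⟨s, hs, rfl⟩
    refine ⟨?_, ?_, Set.inter_subset_left, ?_⟩
    · exact (isClosed_set_pi (fun n _ => (hC n).1)).inter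
        (isClosed_sInter fun F hF => (h𝒜 F (hs hF)).1)
    · exact (convex_pi (fun n _ => (hC n).2.1)).inter
        (convex_sInter fun F hF => (h𝒜 F (hs hF)).2.1)
    · rcases s.eq_empty_or_nonempty with rfl | ⟨F, hF⟩
      · obtain ⟨y, hy⟩ := hfin {F₀} (by simpa using hF₀)
        refine ⟨y, (h𝒜 F₀ hF₀).2.2 (by simpa using hy), by simp⟩
      · obtain ⟨x, hx⟩ := hfin s hs
        have hxF : x ∈ F := hx F (by exact_mod_cast hF)
        exact ⟨x, (h𝒜 F (hs (by exact_mod_cast hF))).2.2 hxF, hx⟩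
  have hBinter : ∀ T ∈ ℬ, ∀ T' ∈ ℬ, T ∩ T' ∈ ℬ := by
    rintro T ⟨s, hs, rfl⟩ T' ⟨s', hs', rfl⟩
    refine ⟨s ∪ s', ?_, ?_⟩
    · rw [Finset.coe_union]
      exact Set.union_subset hs hs'
    · rw [Finset.coe_union, Set.sInter_union]
      ext x
      simp only [Set.mem_inter_iff]
      tauto
  -- balanced chains in each coordinate space
  have hchain := fun n => exists_balanced_chain (X n)
  choose B hB0 hBbal hBadd hBbasis using hchain
  have hB0mem : ∀ n k, (0 : X n) ∈ B n k := fun n k => mem_of_mem_nhds (hB0 n k)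
  have hBsmul : ∀ n k, ∀ t : ℝ, 0 ≤ t → t ≤ 1 → ∀ x ∈ B n k, t • x ∈ B n k := by
    intro n k t ht0 ht1 x hx
    have hns : ‖t‖ ≤ 1 := by rw [Real.norm_eq_abs, abs_of_nonneg ht0]; exact ht1
    exact hBbal n k t hns (Set.smul_mem_smul_set hx)
  -- the invariant
  let Inv : ℕ → (∀ i, X i) → Prop := fun n v =>
    ∀ T ∈ ℬ, ∀ V : ∀ i, Set (X i), (∀ i, i < n → V i ∈ 𝓝 (v i)) →
      ∃ t ∈ T, ∀ i, i < n → t i ∈ V i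
  -- the recursion step
  have step : ∀ n (v : ∀ i, X i), Inv n v → ∃ c, Inv (n + 1) (Function.update v n c) := by
    intro n v hv
    let slice : Set (∀ i, X i) → Set (X n) := fun T =>
      {c | ∀ V : ∀ i, Set (X i), (∀ i, i < n → V i ∈ 𝓝 (v i)) → V n ∈ 𝓝 c →
        ∃ t ∈ T, (∀ i, i < n → t i ∈ V i) ∧ t n ∈ V n}
    have hmono : ∀ T T' : Set (∀ i, X i), T ⊆ T' → slice T ⊆ slice T' := by
      intro T T' hTT c hc V hV hVn
      obtain ⟨t, ht, h1, h2⟩ := hc V hV hVn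
      exact ⟨t, hTT ht, h1, h2⟩
    have hclosed : ∀ T, IsClosed (slice T) := by
      intro T
      rw [← isOpen_compl_iff, isOpen_iff_mem_nhds]
      intro c hc
      simp only [slice, Set.mem_compl_iff, Set.mem_setOf_eq] at hc
      push_neg at hc
      obtain ⟨V, hV, hVn, hnot⟩ := hc
      refine Filter.mem_of_superset
        (isOpen_interior.mem_nhds (mem_interior_iff_mem_nhds.2 hVn)) ?_
      intro c' hc'
      simp only [slice, Set.mem_compl_iff, Set.mem_setOf_eq]
      intro hc'mem
      obtain ⟨t, ht, h1, h2⟩ := hc'mem V hV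
        (Filter.mem_of_superset (isOpen_interior.mem_nhds hc') interior_subset)
      exact hnot t ht h1 h2
    have hconv : ∀ T ∈ ℬ, Convex ℝ (slice T) := by
      intro T hT
      have hTconv : Convex ℝ T := (hBprops T hT).2.1
      intro x hx y hy a b ha hb hab
      intro V hV hVn
      have hsh : ∀ i, ∃ V' : Set (X i), i < n → V' ∈ 𝓝 (v i) ∧
          ∀ p ∈ V', ∀ q ∈ V', a • p + b • q ∈ V i := by
        intro i
        by_cases hi : i < n
        · have hcont : ContinuousAt (fun p : X i × X i => a • p.1 + b • p.2) (v i, v i) := by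
            fun_prop
          have hval : a • v i + b • v i = v i := by rw [← add_smul, hab, one_smul]
          have hpre : (fun p : X i × X i => a • p.1 + b • p.2) ⁻¹' (V i) ∈ 𝓝 (v i, v i) :=
            hcont.preimage_mem_nhds (by rw [hval]; exact hV i hi)
          rw [nhds_prod_eq, Filter.mem_prod_iff] at hpre
          obtain ⟨A, hA, A', hA', hsub⟩ := hpre
          refine ⟨A ∩ A', fun _ => ⟨Filter.inter_mem hA hA', ?_⟩⟩
          intro p hp q hq
          exact hsub (Set.mk_mem_prod hp.1 hq.2)
        · exact ⟨∅, fun h => absurd h hi⟩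
      choose V' hV' using hsh
      have hcontn : ContinuousAt (fun p : X n × X n => a • p.1 + b • p.2) (x, y) := by
        fun_prop
      have hpre : (fun p : X n × X n => a • p.1 + b • p.2) ⁻¹' (V n) ∈ 𝓝 (x, y) :=
        hcontn.preimage_mem_nhds hVn
      rw [nhds_prod_eq, Filter.mem_prod_iff] at hpre
      obtain ⟨A, hA, A', hA', hsub⟩ := hpre
      obtain ⟨t, ht, ht1, ht2⟩ := hx (Function.update V' n A)
        (fun i hi => by
          rw [Function.update_of_ne (by omega)]
          exact (hV' i hi).1)
        (by rw [Function.update_self]; exact hA)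
      obtain ⟨t', ht', ht1', ht2'⟩ := hy (Function.update V' n A')
        (fun i hi => by
          rw [Function.update_of_ne (by omega)]
          exact (hV' i hi).1)
        (by rw [Function.update_self]; exact hA')
      refine ⟨a • t + b • t', hTconv ht ht' ha hb hab, ?_, ?_⟩
      · intro i hi
        have e1 : t i ∈ V' i := by
          have := ht1 i hi
          rwa [Function.update_of_ne (by omega)] at this
        have e2 : t' i ∈ V' i := by
          have := ht1' i hi
          rwa [Function.update_of_ne (by omega)] at this
        have : (a • t + b • t') i = a • t i + b • t' i := by simp
        rw [this]
        exact (hV' i hi).2 (t i) e1 (t' i) e2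
      · have e1 : t n ∈ A := by rwa [Function.update_self] at ht2
        have e2 : t' n ∈ A' := by rwa [Function.update_self] at ht2'
        have : (a • t + b • t') n = a • t n + b • t' n := by simp
        rw [this]
        exact hsub (Set.mk_mem_prod e1 e2)
    have hsubC : ∀ T ∈ ℬ, slice T ⊆ C n := by
      intro T hT c hc
      rw [← (hC n).1.closure_eq]
      rw [mem_closure_iff_nhds]
      intro W hW
      obtain ⟨t, ht, -, h2⟩ := hc (Function.update (fun i => (Set.univ : Set (X i))) n W)
        (fun i hi => by
          rw [Function.update_of_ne (by omega)]
          exact Filter.univ_mem)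
        (by rw [Function.update_self]; exact hW)
      rw [Function.update_self] at h2
      exact ⟨t n, h2, Set.mem_univ_pi.1 ((hBprops T hT).2.2.1 ht) n⟩
    have hne : ∀ T ∈ ℬ, (slice T).Nonempty := by
      intro T hT
      obtain ⟨-, hTconv, hTsub, hTne⟩ := hBprops T hT
      have hq : ∀ k : ℕ, ∃ q ∈ T, ∀ i, i < n → q i - v i ∈ B i k := by
        intro k
        obtain ⟨t, ht, hti⟩ := hv T hT (fun i => (fun y => y - v i) ⁻¹' (B i k))
          (fun i hi => ContinuousAt.preimage_mem_nhds (by fun_prop) (by simpa using hB0 i k))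
        exact ⟨t, ht, fun i hi => hti i hi⟩
      choose q hqT hqB using hq
      let g : ℕ → X n := fun k => q k n
      let Fs : ℕ → Set (X n) := fun j => closure (convexHull ℝ (g '' Set.Ici j))
      have hgC : ∀ k, g k ∈ C n := fun k => Set.mem_univ_pi.1 (hTsub (hqT k)) n
      have hFprops : ∀ j, IsClosed (Fs j) ∧ Convex ℝ (Fs j) ∧ Fs j ⊆ C n := by
        intro j
        refine ⟨isClosed_closure, (convex_convexHull ℝ _).closure, ?_⟩
        rw [IsClosed.closure_subset_iff (hC n).1]
        exact convexHull_min (by rintro x ⟨k, hk, rfl⟩; exact hgC k) (hC n).2.1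
      have hFanti : ∀ j j' : ℕ, j ≤ j' → Fs j' ⊆ Fs j := by
        intro j j' hj
        exact closure_mono (convexHull_mono (Set.image_mono (Set.Ici_subset_Ici.2 hj)))
      have hFne : ∀ j, (Fs j).Nonempty :=
        fun j => ⟨g j, subset_closure (subset_convexHull ℝ _ ⟨j, le_refl j, rfl⟩)⟩
      obtain ⟨c, hc⟩ := (hC n).inter_nonempty {S | ∃ j, S = Fs j}
        (by rintro S ⟨j, rfl⟩; exact hFprops j)
        (by rintro S ⟨j, rfl⟩; exact hFne j)
        (by
          rintro A ⟨j, rfl⟩ A' ⟨j', rfl⟩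
          exact ⟨Fs (max j j'), ⟨max j j', rfl⟩, hFanti _ _ (le_max_left _ _),
            hFanti _ _ (le_max_right _ _)⟩)
        ⟨Fs 0, 0, rfl⟩
      have hcF : ∀ j, c ∈ Fs j := fun j => (Set.mem_sInter.1 hc) _ ⟨j, rfl⟩
      refine ⟨c, ?_⟩
      intro V hV hVn
      have hmi : ∀ i, ∃ m, i < n → ∀ k, m ≤ k → ∀ y ∈ B i k, v i + y ∈ V i := by
        intro i
        by_cases hi : i < n
        · obtain ⟨m, hm⟩ := hBbasis i ((fun y => v i + y) ⁻¹' (V i))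
            (ContinuousAt.preimage_mem_nhds (by fun_prop) (by simpa using hV i hi))
          exact ⟨m, fun _ k hk y hy => hm k hk hy⟩
        · exact ⟨0, fun h => absurd h hi⟩
      choose m hm using hmi
      set j : ℕ := Finset.sup (Finset.range n) m with hj
      have hcj : c ∈ Fs (j + 1) := hcF (j + 1)
      obtain ⟨u, huV, huH⟩ := mem_closure_iff_nhds.1 hcj (V n) hVn
      rw [convexHull_eq] at huH
      obtain ⟨ι, tt, w, z, hw0, hw1, hz, hcm⟩ := huH
      have hκ' : ∀ i, ∃ k, i ∈ tt → (j + 1 ≤ k ∧ g k = z i) := by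
        intro i
        by_cases hi : i ∈ tt
        · obtain ⟨k, hk1, hk2⟩ := hz i hi
          exact ⟨k, fun _ => ⟨hk1, hk2⟩⟩
        · exact ⟨0, fun h => absurd h hi⟩
      choose κ hκ using hκ'
      set tstar : ∀ i', X i' := ∑ i ∈ tt, w i • q (κ i) with htstar
      have htstarT : tstar ∈ T := hTconv.sum_mem hw0 hw1 (fun i hi => hqT (κ i))
      have htapp : ∀ i', tstar i' = ∑ i ∈ tt, w i • q (κ i) i' := by
        intro i'
        rw [htstar, Finset.sum_apply]
        rfl
      refine ⟨tstar, htstarT, ?_, ?_⟩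
      · intro i' hi'
        have hsum : tstar i' - v i' = ∑ i ∈ tt, w i • (q (κ i) i' - v i') := by
          rw [htapp]
          simp only [smul_sub]
          rw [Finset.sum_sub_distrib, ← Finset.sum_smul, hw1, one_smul]
        have hmem : tstar i' - v i' ∈ B i' j := by
          rw [hsum]
          refine sum_mem_chain (B i') (hB0mem i') (hBsmul i') (hBadd i')
            (fun k => q k i' - v i') (fun k => hqB k i' hi') (tt.sup κ) tt w κ j hw0
            (le_of_eq hw1) ?_
          intro i hi
          have h1 := (hκ i hi).1
          have h2 : κ i ≤ tt.sup κ := Finset.le_sup hi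
          exact ⟨by omega, by omega⟩
        have := hm i' hi' j (Finset.le_sup (Finset.mem_range.2 hi')) _ hmem
        have heq : v i' + (tstar i' - v i') = tstar i' := by abel
        rwa [heq] at this
      · have : tstar n = u := by
          rw [htapp, ← hcm, Finset.centerMass_eq_of_sum_1 _ _ hw1]
          exact Finset.sum_congr rfl fun i hi => by rw [← (hκ i hi).2]
        rw [this]
        exact huV
    -- apply convex compactness of C n to the slice family
    obtain ⟨c, hc⟩ := (hC n).inter_nonempty {S | ∃ T ∈ ℬ, S = slice T}
      (by rintro S ⟨T, hT, rfl⟩; exact ⟨hclosed T, hconv T hT, hsubC T hT⟩)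
      (by rintro S ⟨T, hT, rfl⟩; exact hne T hT)
      (by
        rintro A ⟨T, hT, rfl⟩ A' ⟨T', hT', rfl⟩
        exact ⟨slice (T ∩ T'), ⟨T ∩ T', hBinter T hT T' hT', rfl⟩,
          hmono _ _ Set.inter_subset_left, hmono _ _ Set.inter_subset_right⟩)
      ⟨slice Pbar, Pbar, hPbarB, rfl⟩
    refine ⟨c, ?_⟩
    intro T hT V hV
    have hcT : c ∈ slice T := (Set.mem_sInter.1 hc) _ ⟨T, hT, rfl⟩
    obtain ⟨t, ht, h1, h2⟩ := hcT V
      (fun i hi => by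
        have := hV i (by omega)
        rwa [Function.update_of_ne (by omega)] at this)
      (by
        have := hV n (by omega)
        rwa [Function.update_self] at this)
    refine ⟨t, ht, ?_⟩
    intro i hi
    rcases Nat.lt_succ_iff_lt_or_eq.1 hi with h | h
    · exact h1 i h
    · subst h; exact h2
  -- construct the sequence of approximations
  have key : ∀ n (v : ∀ i, X i), ∃ c : X n, Inv n v → Inv (n + 1) (Function.update v n c) := by
    intro n v
    by_cases h : Inv n v
    · obtain ⟨c, hc⟩ := step n v h
      exact ⟨c, fun _ => hc⟩
    · exact ⟨0, fun h' => absurd h' h⟩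
  choose stepc hstepc using key
  let vseq : ℕ → ∀ i, X i := fun n =>
    Nat.rec (motive := fun _ => ∀ i, X i) (fun _ => 0)
      (fun m vm => Function.update vm m (stepc m vm)) n
  have hvseqsucc : ∀ m, vseq (m + 1) = Function.update (vseq m) m (stepc m (vseq m)) :=
    fun m => rfl
  have hInv : ∀ n, Inv n (vseq n) := by
    intro n
    induction n with
    | zero =>
      intro T hT V hV
      obtain ⟨t, ht⟩ := (hBprops T hT).2.2.2
      exact ⟨t, ht, fun i hi => absurd hi (by omega)⟩
    | succ n ih =>
      rw [hvseqsucc]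
      exact hstepc n (vseq n) ih
  have hagree : ∀ i m, i < m → vseq m i = vseq (i + 1) i := by
    intro i m him
    induction m with
    | zero => omega
    | succ m ih =>
      rcases Nat.lt_succ_iff_lt_or_eq.1 him with h | h
      · rw [hvseqsucc, Function.update_of_ne (by omega), ih h]
      · subst h; rfl
  set a : ∀ i, X i := fun i => vseq (i + 1) i with ha
  have hInva : ∀ n, ∀ T ∈ ℬ, ∀ V : ∀ i, Set (X i), (∀ i, i < n → V i ∈ 𝓝 (a i)) →
      ∃ t ∈ T, ∀ i, i < n → t i ∈ V i := by
    intro n T hT V hV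
    refine hInv n T hT V (fun i hi => ?_)
    rw [hagree i n hi]
    exact hV i hi
  -- the point a lies in every member of 𝒜
  have haF : ∀ F ∈ 𝒜, a ∈ F := by
    intro F hF
    rw [← (h𝒜 F hF).1.closure_eq, mem_closure_iff_nhds]
    intro U hU
    rw [nhds_pi, Filter.mem_pi] at hU
    obtain ⟨I, hIfin, V, hV, hVsub⟩ := hU
    set nn := hIfin.toFinset.sup id + 1 with hnn
    have hIlt : ∀ i ∈ I, i < nn := by
      intro i hi
      have : i ≤ hIfin.toFinset.sup id := Finset.le_sup (f := id) (hIfin.mem_toFinset.2 hi)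
      omega
    have hTF : Pbar ∩ ⋂₀ (↑({F} : Finset (Set (∀ n, X n))) : Set (Set (∀ n, X n))) ∈ ℬ :=
      ⟨{F}, by simpa using hF, rfl⟩
    obtain ⟨t, ht, hti⟩ := hInva nn _ hTF V (fun i _ => hV i)
    refine ⟨t, hVsub (fun i hi => hti i (hIlt i hi)), ?_⟩
    have h2 := ht.2
    simpa using h2
  have hmem : a ∈ ⋂₀ 𝒜 := Set.mem_sInter.2 haF
  rw [hempty] at hmem
  exact hmem
end

section
/- Let X be a real topological vector space, let A, B, C be directed sets, and let {x_α}_{α∈A}, {y_β}_{β∈B}, {z_γ}_{γ∈C} be nets in X. If {y_β}_{β∈B} is a subnet of convex combinations of {x_α}_{α∈A}, and {z_γ}_{γ∈C} is a subnet of convex combinations of {y_β}_{β∈B}, then {z_γ}_{γ∈C} is a subnet of convex combinations of {x_α}_{α∈A}. -/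
open Set

/-- `y : B → X` is a subnet of convex combinations of the net `x : A → X` if there is a map
`D` from `B` to the nonempty finite subsets of `A` such that `y b ∈ conv{x a : a ∈ D b}`
for every `b`, and for every `a : A` there is `b : B` such that `a ≤ a'` for every
`a' ∈ ⋃_{b' ≥ b} D b'`. -/
def SubnetOfConvexCombinations {X : Type*} [AddCommGroup X] [Module ℝ X]
    {A B : Type*} [PartialOrder A] [PartialOrder B]
    (x : A → X) (y : B → X) : Prop :=
  ∃ D : B → Finset A,
    (∀ b, (D b).Nonempty) ∧
    (∀ b, y b ∈ convexHull ℝ (x '' (D b : Set A))) ∧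
    ∀ a : A, ∃ b : B, ∀ b' : B, b ≤ b' → ∀ a' ∈ D b', a ≤ a'

/-- A subnet of convex combinations of a subnet of convex combinations of
a net `x` is itself a subnet of convex combinations of `x`. -/
theorem statement15 {X : Type*} [AddCommGroup X] [Module ℝ X] [TopologicalSpace X]
    [IsTopologicalAddGroup X] [ContinuousSMul ℝ X]
    {A B C : Type*} [PartialOrder A] [IsDirected A (· ≤ ·)]
    [PartialOrder B] [IsDirected B (· ≤ ·)] [PartialOrder C] [IsDirected C (· ≤ ·)]
    (x : A → X) (y : B → X) (z : C → X)
    (hyx : SubnetOfConvexCombinations x y) (hzy : SubnetOfConvexCombinations y z) :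
    SubnetOfConvexCombinations x z := by
  classical
  obtain ⟨D, hDne, hDconv, hDcof⟩ := hyx
  obtain ⟨E, hEne, hEconv, hEcof⟩ := hzy
  refine ⟨fun c => (E c).biUnion D, ?_, ?_, ?_⟩
  · intro c
    obtain ⟨b, hb⟩ := hEne c
    obtain ⟨a, ha⟩ := hDne b
    exact ⟨a, Finset.mem_biUnion.2 ⟨b, hb, ha⟩⟩
  · intro c
    have hsub : y '' (E c : Set B) ⊆ convexHull ℝ (x '' (((E c).biUnion D : Finset A) : Set A)) := by
      rintro _ ⟨b, hb, rfl⟩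
      refine convexHull_mono ?_ (hDconv b)
      apply image_mono
      intro a ha
      exact Finset.mem_coe.2 (Finset.mem_biUnion.2 ⟨b, hb, ha⟩)
    have := convexHull_min hsub (convex_convexHull ℝ _)
    exact this (hEconv c)
  · intro a
    obtain ⟨b, hb⟩ := hDcof a
    obtain ⟨c, hc⟩ := hEcof b
    refine ⟨c, fun c' hcc' a' ha' => ?_⟩
    obtain ⟨b', hb', ha'⟩ := Finset.mem_biUnion.1 ha'
    exact hb b' (hc c' hcc' b' hb') a' ha'
end

section
/- Let (Ω, F, (F_t)_{t≥0}, P) be a filtered probability space on which regular conditional probabilities P_t(ω, ·) = P(· | F_t)(ω) exist (for example Ω a standard Borel space), and let (G_t)_{t≥0} be a filtration enlargement of (F_t), i.e. G_t ⊇ F_t for all t, such that each G_t is countably generated. Assume there exists a universal supermartingale density for (G_t): an adapted (with respect to (G_t)), almost surely càdlàg process Z with P(Z_t > 0) = 1 for all t ≥ 0, such that ZM is a (G_t)-supermartingale for every nonnegative (F_t)-supermartingale M. Then the generalized Jacod criterion holds: for all t, s ≥ 0 there exists a P-null set N such that for every ω ∉ N and every B ∈ G_t, P_t(ω, B) = 0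 implies P_{t+s}(ω, B) = 0; that is, P-almost surely the restriction of P_{t+s}(ω, ·) to G_t is absolutely continuous with respect to the restriction of P_t(ω, ·) to G_t. -/
open MeasureTheory Filter Set
open scoped ENNReal NNReal Topology
open scoped symmDiff

namespace Statement18Aux

attribute [local instance] Classical.propDecidable

noncomputable section

variable {Ω : Type*}

/-- The level-`k` atom with profile `f` of the family of sets `Bs`. -/
def atm (Bs : ℕ → Set Ω) (k : ℕ) (f : Fin k → Bool) : Set Ω :=
  {ω | ∀ i : Fin k, (ω ∈ Bs i ↔ f i = true)}

/-- The profile of a point at level `k`. -/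
def prof (Bs : ℕ → Set Ω) (k : ℕ) (ω : Ω) : Fin k → Bool :=
  fun i => if ω ∈ Bs i then true else false

lemma mem_atm_prof (Bs : ℕ → Set Ω) (k : ℕ) (ω : Ω) : ω ∈ atm Bs k (prof Bs k ω) := by
  intro i
  simp only [prof]
  by_cases h : ω ∈ Bs i <;> simp [h]

lemma prof_eq_of_mem {Bs : ℕ → Set Ω} {k : ℕ} {f : Fin k → Bool} {ω : Ω}
    (h : ω ∈ atm Bs k f) : prof Bs k ω = f := by
  funext i
  have hi := h i
  simp only [prof]
  by_cases hb : ω ∈ Bs i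
  · simp [hb, (hi.mp hb).symm]
  · have : f i ≠ true := fun ht => hb (hi.mpr ht)
    simp [hb, (Bool.not_eq_true _).mp this]

lemma atm_disjoint {Bs : ℕ → Set Ω} {k : ℕ} {f g : Fin k → Bool} (hfg : f ≠ g) :
    Disjoint (atm Bs k f) (atm Bs k g) := by
  rw [Set.disjoint_left]
  intro ω hf hg
  exact hfg ((prof_eq_of_mem hf).symm.trans (prof_eq_of_mem hg))

lemma measurableSet_atm (Bs : ℕ → Set Ω) (k : ℕ) (f : Fin k → Bool) :
    MeasurableSet[MeasurableSpace.generateFrom (Set.range Bs)] (atm Bs k f) := by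
  have : atm Bs k f = ⋂ i : Fin k, (if f i = true then Bs i else (Bs i)ᶜ) := by
    ext ω
    simp only [atm, Set.mem_setOf_eq, Set.mem_iInter]
    refine ⟨fun h i => ?_, fun h i => ?_⟩
    · by_cases hf : f i = true <;> simp [hf, Set.mem_compl_iff] at h ⊢
      · exact (h i).mpr hf
      · intro hb; rw [← h i] at hf; exact hf hb
    · have := h i
      by_cases hf : f i = true <;> simp [hf, Set.mem_compl_iff] at this ⊢
      · exact this
      · exact this
  rw [this]
  refine MeasurableSet.iInter fun i => ?_
  by_cases hf : f i = true <;> simp only [hf, if_true, if_false]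
  · exact MeasurableSpace.measurableSet_generateFrom (Set.mem_range_self _)
  · exact (MeasurableSpace.measurableSet_generateFrom (Set.mem_range_self _)).compl

/-- Union of level-`k` atoms indexed by a finset of profiles. -/
def aUnion (Bs : ℕ → Set Ω) (k : ℕ) (F : Finset (Fin k → Bool)) : Set Ω :=
  ⋃ f ∈ F, atm Bs k f

lemma measurableSet_aUnion (Bs : ℕ → Set Ω) (k : ℕ) (F : Finset (Fin k → Bool)) :
    MeasurableSet[MeasurableSpace.generateFrom (Set.range Bs)] (aUnion Bs k F) :=
  MeasurableSet.biUnion F.countable_toSet fun f _ => measurableSet_atm Bs k f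

lemma mem_aUnion_iff {Bs : ℕ → Set Ω} {k : ℕ} {F : Finset (Fin k → Bool)} {ω : Ω} :
    ω ∈ aUnion Bs k F ↔ prof Bs k ω ∈ F := by
  constructor
  · rintro hω
    simp only [aUnion, Set.mem_iUnion] at hω
    obtain ⟨f, hf, hmem⟩ := hω
    rwa [prof_eq_of_mem hmem]
  · intro h
    exact Set.mem_biUnion h (mem_atm_prof Bs k ω)

/-- Lift a level-`k` atom union to a level-`K ≥ k` atom union. -/
lemma aUnion_lift (Bs : ℕ → Set Ω) {k K : ℕ} (h : k ≤ K) (F : Finset (Fin k → Bool)) :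
    aUnion Bs k F
      = aUnion Bs K (Finset.univ.filter fun f => (fun i : Fin k => f (Fin.castLE h i)) ∈ F) := by
  ext ω
  rw [mem_aUnion_iff, mem_aUnion_iff, Finset.mem_filter]
  have hprof : (fun i : Fin k => prof Bs K ω (Fin.castLE h i)) = prof Bs k ω := by
    funext i; simp [prof, Fin.castLE]
  simp [hprof]

lemma compl_aUnion (Bs : ℕ → Set Ω) (k : ℕ) (F : Finset (Fin k → Bool)) :
    (aUnion Bs k F)ᶜ = aUnion Bs k (Finset.univ \ F) := by
  ext ω
  simp [mem_aUnion_iff, Set.mem_compl_iff]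

lemma aUnion_union (Bs : ℕ → Set Ω) {k : ℕ} (F G : Finset (Fin k → Bool)) :
    aUnion Bs k F ∪ aUnion Bs k G = aUnion Bs k (F ∪ G) := by
  ext ω
  simp [mem_aUnion_iff, Set.mem_union, Finset.mem_union]

end

end Statement18Aux

namespace Statement18Aux

noncomputable section

attribute [local instance] Classical.propDecidable

variable {Ω : Type*} {mΩ : MeasurableSpace Ω}

lemma theta_symmDiff_union {θ : Measure Ω} (B₁ B₂ A₁ A₂ : Set Ω) :
    θ ((B₁ ∪ B₂) ∆ (A₁ ∪ A₂)) ≤ θ (B₁ ∆ A₁) + θ (B₂ ∆ A₂) := by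
  refine le_trans (measure_mono ?_) (measure_union_le _ _)
  intro x hx
  simp only [Set.mem_symmDiff, Set.mem_union] at hx ⊢
  tauto

lemma theta_symmDiff_triangle {θ : Measure Ω} (A B C : Set Ω) :
    θ (A ∆ C) ≤ θ (A ∆ B) + θ (B ∆ C) :=
  le_trans (measure_mono (symmDiff_triangle A B C)) (measure_union_le _ _)

/-- Approximation of sets in a countably generated σ-algebra by finite unions of atoms,
in the measure of a finite measure. -/
lemma approx_symmDiff (Bs : ℕ → Set Ω) (hBs : ∀ i, MeasurableSet (Bs i))
    (θ : Measure Ω) [IsFiniteMeasure θ] {B : Set Ω}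
    (hB : MeasurableSet[MeasurableSpace.generateFrom (Set.range Bs)] B) :
    ∀ ε : ℝ≥0∞, ε ≠ 0 → ∃ k F, θ (B ∆ aUnion Bs k F) ≤ ε := by
  have hle : MeasurableSpace.generateFrom (Set.range Bs) ≤ mΩ :=
    MeasurableSpace.generateFrom_le (by rintro s ⟨i, rfl⟩; exact hBs i)
  induction B, hB using MeasurableSpace.generateFrom_induction with
  | hC u hu _ =>
    intro ε _
    obtain ⟨n, rfl⟩ := hu
    refine ⟨n + 1, Finset.univ.filter fun f => f ⟨n, Nat.lt_succ_self n⟩ = true, ?_⟩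
    have huniv : Bs n
        = aUnion Bs (n + 1) (Finset.univ.filter fun f => f ⟨n, Nat.lt_succ_self n⟩ = true) := by
      ext ω
      rw [mem_aUnion_iff, Finset.mem_filter]
      simp [prof]
    rw [← huniv, symmDiff_self]
    simp
  | empty =>
    intro ε _
    refine ⟨0, ∅, ?_⟩
    have h2 : aUnion Bs 0 (∅ : Finset (Fin 0 → Bool)) = ∅ := by simp [aUnion]
    rw [h2, symmDiff_self]
    simp
  | compl u hu ih =>
    intro ε hε
    obtain ⟨k, F, hF⟩ := ih ε hε
    refine ⟨k, Finset.univ \ F, ?_⟩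
    rw [← compl_aUnion, compl_symmDiff_compl]
    exact hF
  | iUnion s hs ih =>
    intro ε hε
    have hε2 : ε / 2 ≠ 0 := by
      rw [ne_eq, ENNReal.div_eq_zero_iff]
      push_neg
      exact ⟨hε, ENNReal.ofNat_ne_top⟩
    have hsm : ∀ n, MeasurableSet (s n) := fun n => hle _ (hs n)
    -- finite unions are approximable
    have hfin : ∀ N : ℕ, ∀ δ : ℝ≥0∞, δ ≠ 0 →
        ∃ k F, θ ((⋃ n ∈ Finset.range N, s n) ∆ aUnion Bs k F) ≤ δ := by
      intro N
      induction N with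
      | zero =>
        intro δ _
        refine ⟨0, ∅, ?_⟩
        have h1 : (⋃ n ∈ Finset.range 0, s n) = (∅ : Set Ω) := by simp
        have h2 : aUnion Bs 0 (∅ : Finset (Fin 0 → Bool)) = ∅ := by simp [aUnion]
        rw [h1, h2, symmDiff_self]
        simp
      | succ N ihN =>
        intro δ hδ
        have hδ2 : δ / 2 ≠ 0 := by
          rw [ne_eq, ENNReal.div_eq_zero_iff]
          push_neg
          exact ⟨hδ, ENNReal.ofNat_ne_top⟩
        obtain ⟨k₁, F₁, h₁⟩ := ihN (δ / 2) hδ2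
        obtain ⟨k₂, F₂, h₂⟩ := ih N (δ / 2) hδ2
        set F₁' : Finset (Fin (max k₁ k₂) → Bool) :=
          Finset.univ.filter fun f => (fun i : Fin k₁ => f (Fin.castLE (le_max_left k₁ k₂) i)) ∈ F₁
        set F₂' : Finset (Fin (max k₁ k₂) → Bool) :=
          Finset.univ.filter fun f => (fun i : Fin k₂ => f (Fin.castLE (le_max_right k₁ k₂) i)) ∈ F₂
        have e₁ : aUnion Bs k₁ F₁ = aUnion Bs (max k₁ k₂) F₁' :=
          aUnion_lift Bs (le_max_left k₁ k₂) F₁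
        have e₂ : aUnion Bs k₂ F₂ = aUnion Bs (max k₁ k₂) F₂' :=
          aUnion_lift Bs (le_max_right k₁ k₂) F₂
        refine ⟨max k₁ k₂, F₁' ∪ F₂', ?_⟩
        have hset : (⋃ n ∈ Finset.range (N + 1), s n)
            = (⋃ n ∈ Finset.range N, s n) ∪ s N := by
          rw [Finset.range_add_one, Finset.set_biUnion_insert]
          exact Set.union_comm _ _
        rw [hset, ← aUnion_union]
        calc θ ((((⋃ n ∈ Finset.range N, s n)) ∪ s N)
              ∆ (aUnion Bs (max k₁ k₂) F₁' ∪ aUnion Bs (max k₁ k₂) F₂'))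
            ≤ θ ((⋃ n ∈ Finset.range N, s n) ∆ aUnion Bs (max k₁ k₂) F₁')
              + θ (s N ∆ aUnion Bs (max k₁ k₂) F₂') := theta_symmDiff_union _ _ _ _
          _ ≤ δ / 2 + δ / 2 := by
              rw [← e₁, ← e₂]
              exact add_le_add h₁ h₂
          _ = δ := ENNReal.add_halves δ
    -- tail bound
    have hEmeas : ∀ N : ℕ, MeasurableSet ((⋃ i, s i) \ ⋃ n ∈ Finset.range N, s n) := fun N =>
      (MeasurableSet.iUnion hsm).diff
        (MeasurableSet.biUnion (Finset.range N).countable_toSet fun n _ => hsm n)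
    have hanti : Antitone fun N => (⋃ i, s i) \ ⋃ n ∈ Finset.range N, s n := by
      intro N M hNM
      apply Set.diff_subset_diff_right
      intro x hx
      simp only [Set.mem_iUnion, exists_prop] at hx ⊢
      obtain ⟨n, hn, hxn⟩ := hx
      exact ⟨n, Finset.mem_range.mpr (lt_of_lt_of_le (Finset.mem_range.mp hn) hNM), hxn⟩
    have hiInter : (⋂ N, (⋃ i, s i) \ ⋃ n ∈ Finset.range N, s n) = ∅ := by
      rw [Set.eq_empty_iff_forall_notMem]
      intro ω hω
      rw [Set.mem_iInter] at hω
      obtain ⟨i, hi⟩ := Set.mem_iUnion.mp (hω 0).1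
      refine (hω (i + 1)).2 ?_
      exact Set.mem_biUnion (Finset.self_mem_range_succ i) hi
    have htendsto := tendsto_measure_iInter_atTop (μ := θ)
      (fun N => (hEmeas N).nullMeasurableSet) hanti ⟨0, measure_ne_top θ _⟩
    rw [hiInter] at htendsto
    simp only [measure_empty] at htendsto
    have hev : ∀ᶠ N in atTop, θ ((⋃ i, s i) \ ⋃ n ∈ Finset.range N, s n) < ε / 2 :=
      htendsto.eventually (gt_mem_nhds (pos_iff_ne_zero.mpr hε2))
    obtain ⟨N, hN⟩ := hev.exists
    obtain ⟨k, F, hkF⟩ := hfin N (ε / 2) hε2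
    refine ⟨k, F, ?_⟩
    calc θ ((⋃ i, s i) ∆ aUnion Bs k F)
        ≤ θ ((⋃ i, s i) ∆ ⋃ n ∈ Finset.range N, s n)
          + θ ((⋃ n ∈ Finset.range N, s n) ∆ aUnion Bs k F) := theta_symmDiff_triangle _ _ _
      _ ≤ ε / 2 + ε / 2 := by
          refine add_le_add ?_ hkF
          have hsub : (⋃ n ∈ Finset.range N, s n) ⊆ ⋃ i, s i := by
            intro x hx
            simp only [Set.mem_iUnion, exists_prop] at hx
            exact Set.mem_iUnion.mpr ⟨hx.choose, hx.choose_spec.2⟩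
          rw [symmDiff_of_ge hsub]
          exact le_of_lt hN
      _ = ε := ENNReal.add_halves ε

end

end Statement18Aux

namespace Statement18Aux

noncomputable section

variable {Ω : Type*} {m : MeasurableSpace Ω}

lemma kernelSupermartingale (P : Measure Ω) [IsProbabilityMeasure P]
    (ℱ : Filtration ℝ≥0 m) (κ : ℝ≥0 → Ω → Measure Ω)
    (hκprob : ∀ t ω, IsProbabilityMeasure (κ t ω))
    (hκmeas : ∀ t : ℝ≥0, ∀ A : Set Ω, MeasurableSet A → Measurable[ℱ t] fun ω => κ t ω A)
    (hκcond : ∀ t : ℝ≥0, ∀ A : Set Ω, MeasurableSet A → ∀ C : Set Ω, MeasurableSet[ℱ t] C →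
      P (C ∩ A) = ∫⁻ ω in C, κ t ω A ∂P)
    {a : Set Ω} (ha : MeasurableSet a) :
    Supermartingale (fun u ω => (κ u ω a).toReal) ℱ P := by
  have hmeas : ∀ u : ℝ≥0, Measurable fun ω => κ u ω a :=
    fun u => (hκmeas u a ha).mono (ℱ.le u) le_rfl
  have hint : ∀ u : ℝ≥0, Integrable (fun ω => (κ u ω a).toReal) P := by
    intro u
    refine ⟨(hmeas u).ennreal_toReal.aestronglyMeasurable, ?_⟩
    refine HasFiniteIntegral.of_bounded (C := 1) (ae_of_all _ fun ω => ?_)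
    rw [Real.norm_of_nonneg ENNReal.toReal_nonneg]
    haveI := hκprob u ω
    have h1 : κ u ω a ≤ 1 := prob_le_one
    simpa using ENNReal.toReal_mono ENNReal.one_ne_top h1
  have key : ∀ (u : ℝ≥0) (s : Set Ω), MeasurableSet[ℱ u] s →
      ∫ ω in s, (κ u ω a).toReal ∂P = (P (s ∩ a)).toReal := by
    intro u s hs
    rw [integral_toReal ((hmeas u).aemeasurable.restrict)
      (ae_of_all _ fun ω => by haveI := hκprob u ω; exact measure_lt_top _ _),
      ← hκcond u a ha s hs]
  have hce : ∀ i j : ℝ≥0, i ≤ j →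
      (fun ω => (κ i ω a).toReal) =ᵐ[P] P[fun ω => (κ j ω a).toReal | ℱ i] := by
    intro i j hij
    refine ae_eq_condExp_of_forall_setIntegral_eq (ℱ.le i) (hint j)
      (fun s _ _ => (hint i).integrableOn) (fun s hs _ => ?_) ?_
    · rw [key i s hs, key j s (ℱ.mono hij _ hs)]
    · exact StronglyMeasurable.aestronglyMeasurable
        ((hκmeas i a ha).ennreal_toReal.stronglyMeasurable)
  exact ⟨fun u => ((hκmeas u a ha).ennreal_toReal).stronglyMeasurable,
    fun i j hij => (hce i j hij).symm.le, hint⟩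

end

end Statement18Aux


open Statement18Aux in
/-- (A universal supermartingale density implies the generalized Jacod
criterion.) Let `(G_t)` be a filtration enlargement of `(F_t)` with each `G_t` countably
generated, and let `P_t(ω, ·)` be regular conditional probabilities given `F_t`. If there
exists a universal supermartingale density `Z` for `(G_t)`, then for all `t, s ≥ 0` there is
a `P`-null set `N` such that for every `ω ∉ N` and every `B ∈ G_t`, `P_t(ω, B) = 0` implies
`P_{t+s}(ω, B) = 0`; i.e. a.s. `P_{t+s}(ω, ·)|_{G_t} ≪ P_t(ω, ·)|_{G_t}`. -/
theorem statement18 {Ω : Type*} {m : MeasurableSpace Ω} (P : Measure Ω) [IsProbabilityMeasure P]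
    (ℱ : Filtration ℝ≥0 m)
    (𝒢 : ℝ≥0 → MeasurableSpace Ω)
    (h𝒢F : ∀ t, ℱ t ≤ 𝒢 t) (h𝒢m : ∀ t, 𝒢 t ≤ m)
    (h𝒢count : ∀ t : ℝ≥0, ∃ B : ℕ → Set Ω, 𝒢 t = MeasurableSpace.generateFrom (Set.range B))
    (κ : ℝ≥0 → Ω → Measure Ω)
    (hκprob : ∀ t ω, IsProbabilityMeasure (κ t ω))
    (hκmeas : ∀ t : ℝ≥0, ∀ A : Set Ω, MeasurableSet A → Measurable[ℱ t] fun ω => κ t ω A)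
    (hκcond : ∀ t : ℝ≥0, ∀ A : Set Ω, MeasurableSet A → ∀ C : Set Ω, MeasurableSet[ℱ t] C →
      P (C ∩ A) = ∫⁻ ω in C, κ t ω A ∂P)
    (Z : ℝ≥0 → Ω → ℝ)
    (hZadapted : ∀ t, Measurable[𝒢 t] (Z t))
    (hZcadlag : ∀ᵐ ω ∂P, (∀ t, ContinuousWithinAt (fun s => Z s ω) (Ici t) t) ∧
      ∀ t : ℝ≥0, 0 < t → ∃ c : ℝ, Tendsto (fun s => Z s ω) (𝓝[<] t) (𝓝 c))
    (hZpos : ∀ t, P {ω | 0 < Z t ω} = 1)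
    (hZuniv : ∀ M : ℝ≥0 → Ω → ℝ, Supermartingale M ℱ P → (∀ t ω, 0 ≤ M t ω) →
      (∀ t, Integrable (fun ω => Z t ω * M t ω) P) ∧
      ∀ s t : ℝ≥0, s ≤ t → ∀ A : Set Ω, MeasurableSet[𝒢 s] A →
        ∫ ω in A, Z t ω * M t ω ∂P ≤ ∫ ω in A, Z s ω * M s ω ∂P) :
    ∀ t s : ℝ≥0, ∃ N : Set Ω, MeasurableSet N ∧ P N = 0 ∧
      ∀ ω ∉ N, ∀ B : Set Ω, MeasurableSet[𝒢 t] B → κ t ω B = 0 → κ (t + s) ω B = 0 := by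
  classical
  intro t s
  set T : ℝ≥0 := t + s with hTdef
  have htT : t ≤ T := le_self_add
  obtain ⟨Bs, hG⟩ := h𝒢count t
  have hBsG : ∀ i, MeasurableSet[𝒢 t] (Bs i) := by
    intro i
    rw [hG]
    exact MeasurableSpace.measurableSet_generateFrom (Set.mem_range_self i)
  have hBsMeas : ∀ i, MeasurableSet (Bs i) := fun i => h𝒢m t _ (hBsG i)
  -- basic facts about Z
  have hZsuper1 : Supermartingale (fun (_ : ℝ≥0) (_ : Ω) => (1 : ℝ)) ℱ P :=
    (martingale_const ℱ P (1 : ℝ)).supermartingale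
  have hZint : ∀ u : ℝ≥0, Integrable (Z u) P := by
    intro u
    have h := (hZuniv _ hZsuper1 fun _ _ => zero_le_one).1 u
    simpa using h
  have hZmeas : ∀ u : ℝ≥0, Measurable (Z u) := fun u => (hZadapted u).mono (h𝒢m u) le_rfl
  have hZpos' : ∀ u : ℝ≥0, ∀ᵐ ω ∂P, 0 < Z u ω := by
    intro u
    have hms : MeasurableSet {ω | 0 < Z u ω} := measurableSet_lt measurable_const (hZmeas u)
    rw [ae_iff]
    have hcompl : {ω | ¬0 < Z u ω} = {ω | 0 < Z u ω}ᶜ := by ext ω; simp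
    rw [hcompl, measure_compl hms (measure_ne_top _ _), hZpos u, measure_univ]
    simp
  have hZnn : ∀ u : ℝ≥0, ∀ᵐ ω ∂P, 0 ≤ Z u ω := fun u => (hZpos' u).mono fun ω h => le_of_lt h
  set ζ : Ω → ℝ≥0∞ := fun ω => ENNReal.ofReal (Z T ω) with hζ
  set ξ : Ω → ℝ≥0∞ := fun ω => ENNReal.ofReal (Z t ω) with hξ
  have hζmeas : Measurable ζ := ENNReal.measurable_ofReal.comp (hZmeas T)
  have hξmeas : Measurable ξ := ENNReal.measurable_ofReal.comp (hZmeas t)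
  set K : ℝ≥0∞ := ∫⁻ ω, ξ ω ∂P with hK
  have hKne : K ≠ ⊤ := by
    rw [hK, hξ]
    rw [← ofReal_integral_eq_lintegral_ofReal (hZint t) (hZnn t)]
    exact ENNReal.ofReal_ne_top
  -- the fundamental one-set inequality
  have hL4 : ∀ a : Set Ω, MeasurableSet a → ∀ C : Set Ω, MeasurableSet[𝒢 t] C →
      ∫⁻ ω in C, ζ ω * κ T ω a ∂P ≤ ∫⁻ ω in C, ξ ω * κ t ω a ∂P := by
    intro a ha C hC
    have hsm := kernelSupermartingale P ℱ κ hκprob hκmeas hκcond ha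
    obtain ⟨hint, hineq⟩ := hZuniv _ hsm fun _ _ => ENNReal.toReal_nonneg
    have hkey := hineq t T htT C hC
    have conv : ∀ u : ℝ≥0, ∫⁻ ω in C, ENNReal.ofReal (Z u ω) * κ u ω a ∂P
        = ENNReal.ofReal (∫ ω in C, Z u ω * (κ u ω a).toReal ∂P) := by
      intro u
      have h1 : ∫⁻ ω in C, ENNReal.ofReal (Z u ω) * κ u ω a ∂P
          = ∫⁻ ω in C, ENNReal.ofReal (Z u ω * (κ u ω a).toReal) ∂P := by
        refine lintegral_congr_ae (ae_restrict_of_ae ((hZnn u).mono fun ω h => ?_))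
        haveI := hκprob u ω
        show ENNReal.ofReal (Z u ω) * κ u ω a = ENNReal.ofReal (Z u ω * (κ u ω a).toReal)
        rw [ENNReal.ofReal_mul h, ENNReal.ofReal_toReal (measure_ne_top _ _)]
      rw [h1, ← ofReal_integral_eq_lintegral_ofReal ((hint u).integrableOn)
        (ae_restrict_of_ae ((hZnn u).mono fun ω h => mul_nonneg h ENNReal.toReal_nonneg))]
    rw [hζ, hξ, conv T, conv t]
    exact ENNReal.ofReal_le_ofReal hkey
  -- atoms machinery
  set A : ∀ k : ℕ, (Fin k → Bool) → Set Ω := fun k f => atm Bs k f with hA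
  have hAmeasG : ∀ k f, MeasurableSet[𝒢 t] (A k f) := by
    intro k f
    rw [hG]
    exact measurableSet_atm Bs k f
  have hAmeas : ∀ k f, MeasurableSet (A k f) := fun k f => h𝒢m t _ (hAmeasG k f)
  have hκmeasM : ∀ (u : ℝ≥0) (a : Set Ω), MeasurableSet a → Measurable fun ω => κ u ω a :=
    fun u a ha => (hκmeas u a ha).mono (ℱ.le u) le_rfl
  have hsum_own : ∀ (k : ℕ) (G : (Fin k → Bool) → Ω → ℝ≥0∞) (ω : Ω),
      (∑ f : Fin k → Bool, Set.indicator (A k f) (G f) ω) = G (prof Bs k ω) ω := by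
    intro k G ω
    rw [Finset.sum_eq_single (prof Bs k ω)]
    · exact Set.indicator_of_mem (mem_atm_prof Bs k ω) _
    · intro f _ hf
      exact Set.indicator_of_notMem (fun hmem => hf (prof_eq_of_mem hmem).symm) _
    · intro h
      exact absurd (Finset.mem_univ _) h
  set νown : ℕ → Ω → ℝ≥0∞ := fun k ω => κ t ω (A k (prof Bs k ω)) with hνown
  set μown : ℕ → Ω → ℝ≥0∞ := fun k ω => κ T ω (A k (prof Bs k ω)) with hμown
  have hνown_eq : ∀ k ω, νown k ω
      = ∑ f : Fin k → Bool, Set.indicator (A k f) (fun ω' => κ t ω' (A k f)) ω := by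
    intro k ω
    rw [hsum_own k (fun f ω' => κ t ω' (A k f)) ω]
  have hμown_eq : ∀ k ω, μown k ω
      = ∑ f : Fin k → Bool, Set.indicator (A k f) (fun ω' => κ T ω' (A k f)) ω := by
    intro k ω
    rw [hsum_own k (fun f ω' => κ T ω' (A k f)) ω]
  have hνown_measG : ∀ k, Measurable[𝒢 t] (νown k) := by
    intro k
    have : νown k = fun ω => ∑ f : Fin k → Bool,
        Set.indicator (A k f) (fun ω' => κ t ω' (A k f)) ω := by
      funext ω
      exact hνown_eq k ω
    rw [this]
    exact Finset.measurable_sum _ fun f _ =>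
      Measurable.indicator ((hκmeas t _ (hAmeas k f)).mono (h𝒢F t) le_rfl) (hAmeasG k f)
  have hνown_meas : ∀ k, Measurable (νown k) := fun k => (hνown_measG k).mono (h𝒢m t) le_rfl
  have hμown_meas : ∀ k, Measurable (μown k) := by
    intro k
    have : μown k = fun ω => ∑ f : Fin k → Bool,
        Set.indicator (A k f) (fun ω' => κ T ω' (A k f)) ω := by
      funext ω
      exact hμown_eq k ω
    rw [this]
    exact Finset.measurable_sum _ fun f _ =>
      Measurable.indicator (hκmeasM T _ (hAmeas k f)) (hAmeas k f)
  -- selected-mass functions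
  set Gf : ℕ → ℕ → Ω → ℝ≥0∞ := fun c k ω =>
    ∑ f : Fin k → Bool,
      if (c : ℝ≥0∞) * κ t ω (A k f) < κ T ω (A k f) then κ T ω (A k f) else 0 with hGf
  have hGf_meas : ∀ c k, Measurable (Gf c k) := by
    intro c k
    refine Finset.measurable_sum _ fun f _ => Measurable.ite ?_ (hκmeasM T _ (hAmeas k f))
      measurable_const
    exact measurableSet_lt ((hκmeasM t _ (hAmeas k f)).const_mul _) (hκmeasM T _ (hAmeas k f))
  -- diagonal sets
  set dset : ℕ → ℕ → Set Ω := fun c k => {ω | (c : ℝ≥0∞) * νown k ω < μown k ω} with hdset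
  have hdset_meas : ∀ c k, MeasurableSet (dset c k) := fun c k =>
    measurableSet_lt ((hνown_meas k).const_mul _) (hμown_meas k)
  -- (2a): the tower identity
  have h2a : ∀ c k : ℕ, P (dset c k) = ∫⁻ ω, Gf c k ω ∂P := by
    intro c k
    have hDmeasT : ∀ f : Fin k → Bool,
        MeasurableSet[ℱ T] {ω | (c : ℝ≥0∞) * κ t ω (A k f) < κ T ω (A k f)} := fun f =>
      measurableSet_lt (((hκmeas t _ (hAmeas k f)).mono (ℱ.mono htT) le_rfl).const_mul _)
        (hκmeas T _ (hAmeas k f))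
    have hDmeas : ∀ f : Fin k → Bool,
        MeasurableSet {ω | (c : ℝ≥0∞) * κ t ω (A k f) < κ T ω (A k f)} := fun f =>
      ℱ.le T _ (hDmeasT f)
    have hdeq : dset c k = ⋃ f ∈ (Finset.univ : Finset (Fin k → Bool)),
        (A k f ∩ {ω | (c : ℝ≥0∞) * κ t ω (A k f) < κ T ω (A k f)}) := by
      ext ω
      simp only [Set.mem_iUnion, Finset.mem_univ, true_and, exists_prop, Set.mem_inter_iff]
      constructor
      · intro hω
        exact ⟨prof Bs k ω, ⟨mem_atm_prof Bs k ω, hω⟩⟩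
      · rintro ⟨f, hf, hDf⟩
        have hpe : prof Bs k ω = f := prof_eq_of_mem hf
        show (c : ℝ≥0∞) * νown k ω < μown k ω
        rw [hνown, hμown]
        simp only
        rw [hpe]
        exact hDf
    rw [hdeq, measure_biUnion_finset ?_ fun f _ => (hAmeas k f).inter (hDmeas f)]
    swap
    · intro f _ g _ hfg
      exact Disjoint.mono Set.inter_subset_left Set.inter_subset_left (atm_disjoint hfg)
    have hPf : ∀ f : Fin k → Bool,
        P (A k f ∩ {ω | (c : ℝ≥0∞) * κ t ω (A k f) < κ T ω (A k f)})
          = ∫⁻ ω in {ω | (c : ℝ≥0∞) * κ t ω (A k f) < κ T ω (A k f)}, κ T ω (A k f) ∂P := by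
      intro f
      rw [Set.inter_comm]
      exact hκcond T (A k f) (hAmeas k f) _ (hDmeasT f)
    rw [Finset.sum_congr rfl fun f _ => hPf f]
    rw [hGf]
    rw [lintegral_finset_sum _ fun f _ => Measurable.ite
      (measurableSet_lt ((hκmeasM t _ (hAmeas k f)).const_mul _) (hκmeasM T _ (hAmeas k f)))
      (hκmeasM T _ (hAmeas k f)) measurable_const]
    refine Finset.sum_congr rfl fun f _ => ?_
    rw [← lintegral_indicator (hDmeas f)]
    refine lintegral_congr fun ω => ?_
    rw [Set.indicator_apply]
    simp only [Set.mem_setOf_eq]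
  -- (2b'): pointwise capture
  have h2b : ∀ (c k : ℕ) (F : Finset (Fin k → Bool)) (ω : Ω),
      κ T ω (aUnion Bs k F) ≤ (c : ℝ≥0∞) * κ t ω (aUnion Bs k F) + Gf c k ω := by
    intro c k F ω
    have hdisj : (↑F : Set (Fin k → Bool)).PairwiseDisjoint fun f => A k f :=
      fun f _ g _ hfg => atm_disjoint hfg
    have hTm : κ T ω (aUnion Bs k F) = ∑ f ∈ F, κ T ω (A k f) :=
      measure_biUnion_finset hdisj fun f _ => hAmeas k f
    have htm : κ t ω (aUnion Bs k F) = ∑ f ∈ F, κ t ω (A k f) :=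
      measure_biUnion_finset hdisj fun f _ => hAmeas k f
    rw [hTm, htm, Finset.mul_sum]
    calc ∑ f ∈ F, κ T ω (A k f)
        ≤ ∑ f ∈ F, ((c : ℝ≥0∞) * κ t ω (A k f)
            + if (c : ℝ≥0∞) * κ t ω (A k f) < κ T ω (A k f) then κ T ω (A k f) else 0) := by
          refine Finset.sum_le_sum fun f _ => ?_
          by_cases hcond : (c : ℝ≥0∞) * κ t ω (A k f) < κ T ω (A k f)
          · rw [if_pos hcond]
            exact le_add_self
          · rw [if_neg hcond, add_zero]
            exact not_lt.mp hcond
      _ = (∑ f ∈ F, (c : ℝ≥0∞) * κ t ω (A k f))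
            + ∑ f ∈ F, (if (c : ℝ≥0∞) * κ t ω (A k f) < κ T ω (A k f) then κ T ω (A k f) else 0) :=
          Finset.sum_add_distrib
      _ ≤ (∑ f ∈ F, (c : ℝ≥0∞) * κ t ω (A k f)) + Gf c k ω := by
          refine add_le_add_right ?_ _
          rw [hGf]
          exact Finset.sum_le_sum_of_subset F.subset_univ
  -- the liminf capture function
  set g : ℕ → Ω → ℝ≥0∞ := fun c ω => ⨆ n : ℕ, ⨅ j : ℕ, Gf c (n + j) ω with hgdef
  have hg_meas : ∀ c, Measurable (g c) := fun c =>
    Measurable.iSup fun n => Measurable.iInf fun j => hGf_meas c (n + j)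
  -- L4' : weighted comparison
  have hL4' : ∀ (k : ℕ) (h : Ω → ℝ≥0∞), Measurable[𝒢 t] h →
      ∫⁻ ω, ζ ω * (h ω * μown k ω) ∂P ≤ ∫⁻ ω, ξ ω * (h ω * νown k ω) ∂P := by
    intro k h hh
    have hhm : Measurable h := hh.mono (h𝒢m t) le_rfl
    have hd1 : Measurable fun ω => ζ ω * μown k ω := hζmeas.mul (hμown_meas k)
    have hd2 : Measurable fun ω => ξ ω * νown k ω := hξmeas.mul (hνown_meas k)
    have hle12 : ∀ C : Set Ω, MeasurableSet[𝒢 t] C →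
        P.withDensity (fun ω => ζ ω * μown k ω) C ≤ P.withDensity (fun ω => ξ ω * νown k ω) C := by
      intro C hC
      rw [withDensity_apply _ (h𝒢m t _ hC), withDensity_apply _ (h𝒢m t _ hC)]
      calc ∫⁻ ω in C, ζ ω * μown k ω ∂P
          = ∑ f : Fin k → Bool, ∫⁻ ω in C,
              Set.indicator (A k f) (fun ω' => ζ ω' * κ T ω' (A k f)) ω ∂P := by
            rw [← lintegral_finset_sum _ fun f _ => Measurable.indicator (f := fun ω' => ζ ω' * κ T ω' (A k f))
              (hζmeas.mul (hκmeasM T _ (hAmeas k f))) (hAmeas k f)]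
            refine lintegral_congr fun ω => ?_
            rw [← hsum_own k (fun f ω' => ζ ω' * κ T ω' (A k f)) ω]
        _ = ∑ f : Fin k → Bool, ∫⁻ ω in A k f ∩ C, ζ ω * κ T ω (A k f) ∂P := by
            refine Finset.sum_congr rfl fun f _ => ?_
            rw [lintegral_indicator (hAmeas k f), Measure.restrict_restrict (hAmeas k f)]
        _ ≤ ∑ f : Fin k → Bool, ∫⁻ ω in A k f ∩ C, ξ ω * κ t ω (A k f) ∂P := by
            refine Finset.sum_le_sum fun f _ => ?_
            exact hL4 (A k f) (hAmeas k f) (A k f ∩ C) ((hAmeasG k f).inter hC)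
        _ = ∑ f : Fin k → Bool, ∫⁻ ω in C,
              Set.indicator (A k f) (fun ω' => ξ ω' * κ t ω' (A k f)) ω ∂P := by
            refine Finset.sum_congr rfl fun f _ => ?_
            rw [lintegral_indicator (hAmeas k f), Measure.restrict_restrict (hAmeas k f)]
        _ = ∫⁻ ω in C, ξ ω * νown k ω ∂P := by
            rw [← lintegral_finset_sum _ fun f _ => Measurable.indicator (f := fun ω' => ξ ω' * κ t ω' (A k f))
              (hξmeas.mul (hκmeasM t _ (hAmeas k f))) (hAmeas k f)]
            refine lintegral_congr fun ω => ?_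
            rw [← hsum_own k (fun f ω' => ξ ω' * κ t ω' (A k f)) ω]
    have hle_trim : (P.withDensity fun ω => ζ ω * μown k ω).trim (h𝒢m t)
        ≤ (P.withDensity fun ω => ξ ω * νown k ω).trim (h𝒢m t) := by
      rw [Measure.le_iff]
      intro C hC
      rw [trim_measurableSet_eq _ hC, trim_measurableSet_eq _ hC]
      exact hle12 C hC
    have w1 : ∫⁻ ω, h ω ∂(P.withDensity fun ω => ζ ω * μown k ω)
        = ∫⁻ ω, (ζ ω * μown k ω) * h ω ∂P :=
      lintegral_withDensity_eq_lintegral_mul P hd1 hhm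
    have w2 : ∫⁻ ω, h ω ∂(P.withDensity fun ω => ξ ω * νown k ω)
        = ∫⁻ ω, (ξ ω * νown k ω) * h ω ∂P :=
      lintegral_withDensity_eq_lintegral_mul P hd2 hhm
    calc ∫⁻ ω, ζ ω * (h ω * μown k ω) ∂P
        = ∫⁻ ω, (ζ ω * μown k ω) * h ω ∂P := lintegral_congr fun ω => by ring
      _ = ∫⁻ ω, h ω ∂(P.withDensity fun ω => ζ ω * μown k ω) := w1.symm
      _ = ∫⁻ ω, h ω ∂((P.withDensity fun ω => ζ ω * μown k ω).trim (h𝒢m t)) :=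
          (lintegral_trim (h𝒢m t) hh).symm
      _ ≤ ∫⁻ ω, h ω ∂((P.withDensity fun ω => ξ ω * νown k ω).trim (h𝒢m t)) :=
          lintegral_mono' hle_trim le_rfl
      _ = ∫⁻ ω, h ω ∂(P.withDensity fun ω => ξ ω * νown k ω) := lintegral_trim (h𝒢m t) hh
      _ = ∫⁻ ω, (ξ ω * νown k ω) * h ω ∂P := w2
      _ = ∫⁻ ω, ξ ω * (h ω * νown k ω) ∂P := lintegral_congr fun ω => by ring
  -- Pillar 1
  have pillar1 : ∀ c k : ℕ, (c : ℝ≥0∞) * ∫⁻ ω in dset c k, ζ ω ∂P ≤ K := by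
    intro c k
    have hp1 : ∀ ω ∈ dset c k, (c : ℝ≥0∞) ≤ (νown k ω)⁻¹ * μown k ω := by
      intro ω hω
      have hlt : (c : ℝ≥0∞) * νown k ω < μown k ω := hω
      by_cases h0 : νown k ω = 0
      · have hμ0 : μown k ω ≠ 0 := by
          intro hμ
          rw [h0, hμ, mul_zero] at hlt
          exact lt_irrefl 0 hlt
        rw [h0, ENNReal.inv_zero, ENNReal.top_mul hμ0]
        exact le_top
      · have hfin : νown k ω ≠ ⊤ := by
          haveI := hκprob t ω
          exact measure_ne_top _ _
        rw [← ENNReal.div_eq_inv_mul, ENNReal.le_div_iff_mul_le (Or.inl h0) (Or.inl hfin)]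
        exact le_of_lt hlt
    have hp2 : ∀ ω : Ω, (νown k ω)⁻¹ * νown k ω ≤ 1 := by
      intro ω
      by_cases h0 : νown k ω = 0
      · rw [h0, mul_zero]
        exact zero_le_one
      · have hfin : νown k ω ≠ ⊤ := by
          haveI := hκprob t ω
          exact measure_ne_top _ _
        rw [ENNReal.inv_mul_cancel h0 hfin]
    calc (c : ℝ≥0∞) * ∫⁻ ω in dset c k, ζ ω ∂P
        = ∫⁻ ω in dset c k, (c : ℝ≥0∞) * ζ ω ∂P := (lintegral_const_mul _ hζmeas).symm
      _ ≤ ∫⁻ ω in dset c k, ζ ω * ((νown k ω)⁻¹ * μown k ω) ∂P := by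
          refine setLIntegral_mono (hζmeas.mul ((hνown_meas k).inv.mul (hμown_meas k)))
            fun ω hω => ?_
          rw [mul_comm (ζ ω)]
          exact mul_le_mul_left (hp1 ω hω) _
      _ ≤ ∫⁻ ω, ζ ω * ((νown k ω)⁻¹ * μown k ω) ∂P := setLIntegral_le_lintegral _ _
      _ ≤ ∫⁻ ω, ξ ω * ((νown k ω)⁻¹ * νown k ω) ∂P := hL4' k _ (hνown_measG k).inv
      _ ≤ ∫⁻ ω, ξ ω ∂P := by
          refine lintegral_mono fun ω => ?_
          calc ξ ω * ((νown k ω)⁻¹ * νown k ω) ≤ ξ ω * 1 := mul_le_mul_right (hp2 ω) _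
            _ = ξ ω := mul_one _
      _ = K := hK.symm
  -- the events E and their nullity
  set Ev : ℕ → Set Ω := fun mq => {ω | ∀ c : ℕ, (((mq : ℝ≥0∞) + 1))⁻¹ ≤ g c ω} with hEv
  have hEv_meas : ∀ mq, MeasurableSet (Ev mq) := by
    intro mq
    have : Ev mq = ⋂ c : ℕ, {ω | (((mq : ℝ≥0∞) + 1))⁻¹ ≤ g c ω} := by
      ext ω
      simp [hEv, Set.mem_iInter]
    rw [this]
    exact MeasurableSet.iInter fun c => measurableSet_le measurable_const (hg_meas c)
  have hEv_null : ∀ mq : ℕ, P (Ev mq) = 0 := by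
    intro mq
    by_contra hp
    set q : ℝ≥0∞ := ((mq : ℝ≥0∞) + 1)⁻¹ with hq
    have hq0 : q ≠ 0 := by
      rw [hq, ne_eq, ENNReal.inv_eq_zero]
      exact ENNReal.add_ne_top.mpr ⟨ENNReal.natCast_ne_top mq, ENNReal.one_ne_top⟩
    have hqtop : q ≠ ⊤ := by
      rw [hq]
      simp
    have hp0 : P (Ev mq) ≠ 0 := hp
    have hptop : P (Ev mq) ≠ ⊤ := measure_ne_top _ _
    have hqp0 : q * P (Ev mq) ≠ 0 := mul_ne_zero hq0 hp0
    have hqptop : q * P (Ev mq) ≠ ⊤ := ENNReal.mul_ne_top hqtop hptop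
    set β : ℝ≥0∞ := q * P (Ev mq) / 2 with hβ
    have hβ0 : β ≠ 0 := by
      rw [hβ, ne_eq, ENNReal.div_eq_zero_iff]
      push_neg
      exact ⟨hqp0, ENNReal.ofNat_ne_top⟩
    have hβ4 : β / 2 ≠ 0 := by
      rw [ne_eq, ENNReal.div_eq_zero_iff]
      push_neg
      exact ⟨hβ0, ENNReal.ofNat_ne_top⟩
    -- bridge
    obtain ⟨δ, hδ0, hbridge⟩ : ∃ δ : ℝ≥0∞, δ ≠ 0 ∧
        ∀ D : Set Ω, MeasurableSet D → β ≤ P D → δ ≤ ∫⁻ ω in D, ζ ω ∂P := by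
      set Tn : ℕ → Set Ω := fun n => {ω | Z T ω < ((n : ℝ) + 1)⁻¹} with hTn
      have hTmeas : ∀ n, MeasurableSet (Tn n) := fun n =>
        measurableSet_lt (hZmeas T) measurable_const
      have hTanti : Antitone Tn := by
        intro n mm hnm ω hω
        have hω' : Z T ω < ((mm : ℝ) + 1)⁻¹ := hω
        show Z T ω < ((n : ℝ) + 1)⁻¹
        have hcast : (n : ℝ) ≤ (mm : ℝ) := Nat.cast_le.mpr hnm
        exact lt_of_lt_of_le hω' (inv_anti₀ (by positivity) (by linarith))
      have hTinter_null : P (⋂ n, Tn n) = 0 := by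
        have hsub : (⋂ n, Tn n) ⊆ {ω | ¬0 < Z T ω} := by
          intro ω hω
          simp only [Set.mem_setOf_eq, not_lt]
          by_contra hpos
          push_neg at hpos
          obtain ⟨n, hn⟩ := exists_nat_one_div_lt hpos
          have hmem := Set.mem_iInter.mp hω n
          rw [hTn] at hmem
          simp only [Set.mem_setOf_eq] at hmem
          rw [one_div] at hn
          exact absurd hmem (not_lt.mpr hn.le)
        refine measure_mono_null hsub ?_
        have hZae := hZpos' T
        rwa [ae_iff] at hZae
      have htendstoT := tendsto_measure_iInter_atTop (μ := P)
        (fun n => (hTmeas n).nullMeasurableSet) hTanti ⟨0, measure_ne_top _ _⟩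
      rw [hTinter_null] at htendstoT
      obtain ⟨n₀, hn₀⟩ := (htendstoT.eventually (gt_mem_nhds (pos_iff_ne_zero.mpr hβ4))).exists
      refine ⟨ENNReal.ofReal ((n₀ : ℝ) + 1)⁻¹ * (β / 2), ?_, ?_⟩
      · refine mul_ne_zero ?_ hβ4
        rw [ne_eq, ENNReal.ofReal_eq_zero, not_le]
        positivity
      · intro D hD hβD
        have hsplit : β / 2 ≤ P (D \ Tn n₀) := by
          by_contra hltc
          push_neg at hltc
          have hDle : P D ≤ P (D \ Tn n₀) + P (Tn n₀) := by
            refine le_trans (measure_mono ?_) (measure_union_le _ _)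
            intro x hx
            by_cases hxT : x ∈ Tn n₀
            · exact Or.inr hxT
            · exact Or.inl ⟨hx, hxT⟩
          have hlt2 : P D < β / 2 + β / 2 := lt_of_le_of_lt hDle (ENNReal.add_lt_add hltc hn₀)
          rw [ENNReal.add_halves] at hlt2
          exact absurd hβD (not_le.mpr hlt2)
        calc ENNReal.ofReal ((n₀ : ℝ) + 1)⁻¹ * (β / 2)
            ≤ ENNReal.ofReal ((n₀ : ℝ) + 1)⁻¹ * P (D \ Tn n₀) := mul_le_mul_right hsplit _
          _ = ∫⁻ _ in D \ Tn n₀, ENNReal.ofReal ((n₀ : ℝ) + 1)⁻¹ ∂P := by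
              rw [setLIntegral_const]
          _ ≤ ∫⁻ ω in D \ Tn n₀, ζ ω ∂P := by
              refine setLIntegral_mono hζmeas fun ω hω => ?_
              refine ENNReal.ofReal_le_ofReal ?_
              have hnot := hω.2
              rw [hTn] at hnot
              simp only [Set.mem_setOf_eq, not_lt] at hnot
              exact hnot
          _ ≤ ∫⁻ ω in D, ζ ω ∂P :=
              lintegral_mono' (Measure.restrict_mono Set.diff_subset le_rfl) le_rfl
    -- per c bound
    have hstep : ∀ c : ℕ, (c : ℝ≥0∞) * δ ≤ K := by
      intro c
      have h1 : q * P (Ev mq) ≤ ∫⁻ ω, g c ω ∂P := by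
        calc q * P (Ev mq) = ∫⁻ _ in Ev mq, q ∂P := by rw [setLIntegral_const]
          _ ≤ ∫⁻ ω in Ev mq, g c ω ∂P := setLIntegral_mono (hg_meas c) fun ω hω => hω c
          _ ≤ ∫⁻ ω, g c ω ∂P := setLIntegral_le_lintegral _ _
      have h2 : ∫⁻ ω, g c ω ∂P ≤ ⨆ n : ℕ, ⨅ j : ℕ, P (dset c (n + j)) := by
        have hmono : Monotone fun n : ℕ => fun ω => ⨅ j : ℕ, Gf c (n + j) ω := by
          intro n n' hnn' ω
          simp only
          refine le_iInf fun j => ?_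
          have : n + (j + (n' - n)) = n' + j := by omega
          exact (iInf_le _ (j + (n' - n))).trans_eq (by rw [this])
        calc ∫⁻ ω, g c ω ∂P
            = ⨆ n : ℕ, ∫⁻ ω, (⨅ j : ℕ, Gf c (n + j) ω) ∂P := by
              rw [hgdef]
              exact lintegral_iSup (fun n => Measurable.iInf fun j => hGf_meas c (n + j)) hmono
          _ ≤ ⨆ n : ℕ, ⨅ j : ℕ, ∫⁻ ω, Gf c (n + j) ω ∂P :=
              iSup_mono fun n => le_iInf fun j => lintegral_mono fun ω => iInf_le _ j
          _ = ⨆ n : ℕ, ⨅ j : ℕ, P (dset c (n + j)) := by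
              refine iSup_congr fun n => iInf_congr fun j => ?_
              rw [h2a c (n + j)]
      have h3 : q * P (Ev mq) ≤ ⨆ n : ℕ, ⨅ j : ℕ, P (dset c (n + j)) := h1.trans h2
      have hhalf : β < q * P (Ev mq) := by
        rw [hβ]
        exact ENNReal.half_lt_self hqp0 hqptop
      obtain ⟨n, hn⟩ := lt_iSup_iff.mp (lt_of_lt_of_le hhalf h3)
      have hk : β ≤ P (dset c n) := by
        refine hn.le.trans ?_
        refine (iInf_le _ 0).trans_eq ?_
        rw [Nat.add_zero]
      have hδle := hbridge (dset c n) (hdset_meas c n) hk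
      calc (c : ℝ≥0∞) * δ ≤ (c : ℝ≥0∞) * ∫⁻ ω in dset c n, ζ ω ∂P := mul_le_mul_right hδle _
        _ ≤ K := pillar1 c n
    -- contradiction
    obtain ⟨c, hc⟩ := ENNReal.exists_nat_gt (ENNReal.div_lt_top hKne hδ0).ne
    have hlt : K < (c : ℝ≥0∞) * δ := by
      rw [← ENNReal.div_lt_iff (Or.inl hδ0) (Or.inr hKne)]
      exact hc
    exact absurd (hstep c) (not_le.mpr hlt)
  -- conclusion
  refine ⟨⋃ mq : ℕ, Ev mq, MeasurableSet.iUnion hEv_meas, measure_iUnion_null hEv_null, ?_⟩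
  intro ω hωN B hB hB0
  -- main step: κ T ω B ≤ g c ω for every c
  have hmain : ∀ c : ℕ, κ T ω B ≤ g c ω := by
    intro c
    by_cases hgtop : g c ω = ⊤
    · rw [hgtop]
      exact le_top
    refine ENNReal.le_of_forall_pos_le_add fun ε hε _ => ?_
    haveI := hκprob t ω
    haveI := hκprob T ω
    set θ : Measure Ω := κ t ω + κ T ω with hθ
    haveI : IsFiniteMeasure θ := by
      constructor
      rw [hθ, Measure.add_apply]
      exact ENNReal.add_lt_top.mpr ⟨measure_lt_top _ _, measure_lt_top _ _⟩
    set ε' : ℝ≥0∞ := (ε : ℝ≥0∞) / ((c : ℝ≥0∞) + 2) with hε'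
    have hc2top : (c : ℝ≥0∞) + 2 ≠ ⊤ :=
      ENNReal.add_ne_top.mpr ⟨ENNReal.natCast_ne_top c, ENNReal.ofNat_ne_top⟩
    have hc20 : (c : ℝ≥0∞) + 2 ≠ 0 := by
      simp
    have hε'0 : ε' ≠ 0 := by
      rw [hε', ne_eq, ENNReal.div_eq_zero_iff]
      push_neg
      exact ⟨ENNReal.coe_ne_zero.mpr hε.ne', hc2top⟩
    have hBgen : MeasurableSet[MeasurableSpace.generateFrom (Set.range Bs)] B := by
      rw [← hG]
      exact hB
    obtain ⟨k₀, F, hkF⟩ := approx_symmDiff Bs hBsMeas θ hBgen ε' hε'0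
    set A0 : Set Ω := aUnion Bs k₀ F with hA0
    have hsymm_T : κ T ω (B ∆ A0) ≤ ε' := by
      refine le_trans ?_ hkF
      rw [hθ, Measure.add_apply]
      exact le_add_self
    have hsymm_t : κ t ω (B ∆ A0) ≤ ε' := by
      refine le_trans ?_ hkF
      rw [hθ, Measure.add_apply]
      exact le_self_add
    have hκTle : κ T ω B ≤ κ T ω A0 + ε' := by
      have h1 : B ⊆ A0 ∪ (B ∆ A0) := by
        intro x hx
        by_cases hxA : x ∈ A0
        · exact Or.inl hxA
        · exact Or.inr (Set.mem_symmDiff.mpr (Or.inl ⟨hx, hxA⟩))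
      calc κ T ω B ≤ κ T ω A0 + κ T ω (B ∆ A0) :=
            le_trans (measure_mono h1) (measure_union_le _ _)
        _ ≤ κ T ω A0 + ε' := add_le_add_right hsymm_T _
    have hκtA : κ t ω A0 ≤ ε' := by
      have h1 : A0 ⊆ B ∪ (B ∆ A0) := by
        intro x hx
        by_cases hxB : x ∈ B
        · exact Or.inl hxB
        · exact Or.inr (Set.mem_symmDiff.mpr (Or.inr ⟨hx, hxB⟩))
      calc κ t ω A0 ≤ κ t ω B + κ t ω (B ∆ A0) :=
            le_trans (measure_mono h1) (measure_union_le _ _)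
        _ = κ t ω (B ∆ A0) := by rw [hB0, zero_add]
        _ ≤ ε' := hsymm_t
    have hlift : ∀ j : ℕ, κ T ω A0 ≤ (c : ℝ≥0∞) * κ t ω A0 + Gf c (k₀ + j) ω := by
      intro j
      rw [hA0, aUnion_lift Bs (Nat.le_add_right k₀ j) F]
      exact h2b c (k₀ + j) _ ω
    have hlift2 : κ T ω A0 ≤ (c : ℝ≥0∞) * κ t ω A0 + g c ω := by
      have h5 : κ T ω A0 - (c : ℝ≥0∞) * κ t ω A0 ≤ ⨅ j : ℕ, Gf c (k₀ + j) ω :=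
        le_iInf fun j => tsub_le_iff_left.mpr (hlift j)
      have h6 : (⨅ j : ℕ, Gf c (k₀ + j) ω) ≤ g c ω := by
        rw [hgdef]
        exact le_iSup (fun n : ℕ => ⨅ j : ℕ, Gf c (n + j) ω) k₀
      exact tsub_le_iff_left.mp (h5.trans h6)
    calc κ T ω B ≤ κ T ω A0 + ε' := hκTle
      _ ≤ ((c : ℝ≥0∞) * κ t ω A0 + g c ω) + ε' := add_le_add_left hlift2 _
      _ ≤ ((c : ℝ≥0∞) * ε' + g c ω) + ε' :=
          add_le_add_left (add_le_add_left (mul_le_mul_right hκtA _) _) _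
      _ = g c ω + ((c : ℝ≥0∞) + 1) * ε' := by ring
      _ ≤ g c ω + (ε : ℝ≥0∞) := by
          refine add_le_add_right ?_ _
          rw [hε']
          calc ((c : ℝ≥0∞) + 1) * ((ε : ℝ≥0∞) / ((c : ℝ≥0∞) + 2))
              ≤ ((c : ℝ≥0∞) + 2) * ((ε : ℝ≥0∞) / ((c : ℝ≥0∞) + 2)) := by
                refine mul_le_mul_left (add_le_add_right one_le_two _) _
            _ = (ε : ℝ≥0∞) := ENNReal.mul_div_cancel hc20 hc2top
  -- conclude κ T ω B = 0
  by_contra hne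
  obtain ⟨n, hn⟩ := ENNReal.exists_inv_nat_lt hne
  have hωn : ω ∉ Ev n := fun hmem => hωN (Set.mem_iUnion.mpr ⟨n, hmem⟩)
  have hex : ∃ c : ℕ, g c ω < ((n : ℝ≥0∞) + 1)⁻¹ := by
    by_contra hall
    push_neg at hall
    exact hωn fun c => hall c
  obtain ⟨c, hc⟩ := hex
  have h1 : κ T ω B < ((n : ℝ≥0∞) + 1)⁻¹ := lt_of_le_of_lt (hmain c) hc
  have h2 : ((n : ℝ≥0∞) + 1)⁻¹ ≤ ((n : ℕ) : ℝ≥0∞)⁻¹ :=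
    ENNReal.inv_le_inv' le_self_add
  exact lt_irrefl _ ((h1.trans_le h2).trans hn)
end
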